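/- If the minimum angle in the Delaunay triangulation of P is at most α = arcsin(1/(2β)), then P contains a loose pair. -/

import Mathlib

open EuclideanGeometry Module

abbrev E2 := EuclideanSpace ℝ (Fin 2)

lemma decomp {F : Type*} [NormedAddCommGroup F] [InnerProductSpace ℝ F]
    [FiniteDimensional ℝ F] (hdim : finrank ℝ F = 2) (e n v : F)
    (he : ‖e‖ = 1) (hn : ‖n‖ = 1) (hen : (inner ℝ e n : ℝ) = 0) :
    ‖v‖^2 = (inner ℝ v e : ℝ)^2 + (inner ℝ v n : ℝ)^2 := by
  have hne : (inner ℝ n e : ℝ) = 0 := by rw [real_inner_comm]; exact hen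
  have hee : (inner ℝ e e : ℝ) = 1 := by
    rw [real_inner_self_eq_norm_sq, he]; norm_num
  have hnn : (inner ℝ n n : ℝ) = 1 := by
    rw [real_inner_self_eq_norm_sq, hn]; norm_num
  have hin : LinearIndependent ℝ ![e, n] := by
    rw [LinearIndependent.pair_iff]
    intro s t hst
    constructor
    · have := congrArg (fun x => (inner ℝ x e : ℝ)) hst
      simp only [inner_add_left, real_inner_smul_left, hee, hne, inner_zero_left, mul_one,
        mul_zero, add_zero, zero_add] at this
      exact this
    · have := congrArg (fun x => (inner ℝ x n : ℝ)) hst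
      simp only [inner_add_left, real_inner_smul_left, hen, hnn, inner_zero_left, mul_one,
        mul_zero, add_zero, zero_add] at this
      exact this
  have hsp : Submodule.span ℝ (Set.range ![e, n]) = ⊤ := by
    apply Submodule.eq_top_of_finrank_eq
    rw [finrank_span_eq_card hin, hdim]
    simp
  set a : ℝ := inner ℝ v e with ha
  set b : ℝ := inner ℝ v n with hb
  set w : F := v - a • e - b • n with hw
  have hwe : (inner ℝ w e : ℝ) = 0 := by
    rw [hw, inner_sub_left, inner_sub_left, real_inner_smul_left, real_inner_smul_left,
      hee, hne]
    ring
  have hwn : (inner ℝ w n : ℝ) = 0 := by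
    rw [hw, inner_sub_left, inner_sub_left, real_inner_smul_left, real_inner_smul_left,
      hen, hnn]
    ring
  have hw0 : w = 0 := by
    have hall : ∀ x : F, (inner ℝ w x : ℝ) = 0 := by
      intro x
      have hx : x ∈ Submodule.span ℝ (Set.range ![e, n]) := by rw [hsp]; trivial
      induction hx using Submodule.span_induction with
      | mem y hy =>
        rcases hy with ⟨i, rfl⟩
        fin_cases i
        · simpa using hwe
        · simpa using hwn
      | zero => simp
      | add x y _ _ hx hy => rw [inner_add_right, hx, hy]; ring
      | smul a x _ hx => rw [real_inner_smul_right, hx]; ring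
    have := hall w
    rwa [inner_self_eq_zero] at this
  have hv : v = a • e + b • n := by
    have h2 : v - (a • e + b • n) = 0 := by rw [← sub_sub, ← hw, hw0]
    have := sub_eq_zero.mp h2
    rw [this]
  have h3 : ‖v‖^2 = (inner ℝ v v : ℝ) := (real_inner_self_eq_norm_sq v).symm
  rw [h3]
  conv_lhs => rw [hv]
  simp only [inner_add_left, inner_add_right, real_inner_smul_left, real_inner_smul_right,
    hee, hen, hne, hnn]
  ring

lemma sqeq {a b : ℝ} (ha : 0 ≤ a) (hb : 0 ≤ b) (h : a^2 = b^2) : a = b := by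
  rw [← Real.sqrt_sq ha, ← Real.sqrt_sq hb, h]


lemma chord (o : E2) (R β : ℝ) (hβ : Real.sqrt 2 ≤ β) (hR : 0 < R)
    (a b c : E2) (hab : a ≠ b) (hac : a ≠ c) (hbc : b ≠ c)
    (hoa : dist o a = R) (hob : dist o b = R) (hoc : dist o c = R)
    (hang : ∠ b a c ≤ Real.arcsin (1/(2*β))) : β * dist b c ≤ R := by
  haveI : Fact (finrank ℝ E2 = 2) := ⟨finrank_euclideanSpace_fin⟩
  haveI : Module.Oriented ℝ E2 (Fin 2) :=
    ⟨(EuclideanSpace.basisFun (Fin 2) ℝ).toBasis.orientation⟩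
  have hβpos : 0 < β := lt_of_lt_of_le (by positivity) hβ
  have hβ1 : 1 ≤ β := by
    have h1 : (1:ℝ) ≤ Real.sqrt 2 := by
      rw [show (1:ℝ) = Real.sqrt 1 by simp]
      exact Real.sqrt_le_sqrt (by norm_num)
    linarith
  set s : EuclideanGeometry.Sphere E2 := ⟨o, R⟩ with hsdef
  have hma : a ∈ s := by
    rw [EuclideanGeometry.mem_sphere, hsdef, dist_comm]; exact hoa
  have hmb : b ∈ s := by
    rw [EuclideanGeometry.mem_sphere, hsdef, dist_comm]; exact hob
  have hmc : c ∈ s := by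
    rw [EuclideanGeometry.mem_sphere, hsdef, dist_comm]; exact hoc
  have law := EuclideanGeometry.Sphere.dist_div_sin_oangle_eq_two_mul_radius
    hmb hma hmc hab.symm hbc hac
  have hrad : s.radius = R := rfl
  rw [hrad] at law
  -- relate |Real.Angle.sin (∡ b a c)| to Real.sin (∠ b a c)
  have hangle : ∠ b a c = |(∡ b a c).toReal| :=
    EuclideanGeometry.angle_eq_abs_oangle_toReal hab.symm hac.symm
  have hsin : |Real.Angle.sin (∡ b a c)| = Real.sin (∠ b a c) := by
    have h1 : Real.Angle.sin (∡ b a c) = Real.sin ((∡ b a c).toReal) := by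
      conv_lhs => rw [← Real.Angle.coe_toReal (∡ b a c)]
      rw [Real.Angle.sin_coe]
    rw [h1, hangle]
    have h2 : |(∡ b a c).toReal| ≤ Real.pi := Real.Angle.abs_toReal_le_pi _
    rcases le_or_gt 0 ((∡ b a c).toReal) with h3 | h3
    · rw [abs_of_nonneg h3, abs_of_nonneg]
      exact Real.sin_nonneg_of_nonneg_of_le_pi h3 (by rwa [abs_of_nonneg h3] at h2)
    · rw [abs_of_neg h3, abs_of_nonpos, Real.sin_neg]
      exact Real.sin_nonpos_of_nonpos_of_neg_pi_le h3.le
        (by rw [abs_of_neg h3] at h2; linarith)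
  -- bound sin of the angle
  have harc1 : (1:ℝ)/(2*β) ≤ 1 := by
    rw [div_le_one (by positivity)]
    linarith
  have harc0 : (0:ℝ) ≤ 1/(2*β) := by positivity
  have hsle : Real.sin (∠ b a c) ≤ 1/(2*β) := by
    have h1 : Real.sin (∠ b a c) ≤ Real.sin (Real.arcsin (1/(2*β))) := by
      apply Real.sin_le_sin_of_le_of_le_pi_div_two _ (Real.arcsin_le_pi_div_two _) hang
      have := EuclideanGeometry.angle_nonneg b a c
      nlinarith [Real.pi_pos]
    rwa [Real.sin_arcsin (by linarith) harc1] at h1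
  -- from the law of sines : dist b c = 2 R * |sin ∡|
  have hsne : |Real.Angle.sin (∡ b a c)| ≠ 0 := by
    intro h0
    rw [h0, div_zero] at law
    linarith
  have hdbc : dist b c = 2*R*|Real.Angle.sin (∡ b a c)| := by
    rw [div_eq_iff hsne] at law
    linarith [law]
  rw [hdbc, hsin]
  have h4 : (2*R*β) * Real.sin (∠ b a c) ≤ (2*R*β) * (1/(2*β)) :=
    mul_le_mul_of_nonneg_left hsle (by positivity)
  have h5 : (2*R*β) * (1/(2*β)) = R := by field_simp
  calc β * (2*R*Real.sin (∠ b a c)) = (2*R*β) * Real.sin (∠ b a c) := by ring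
    _ ≤ (2*R*β) * (1/(2*β)) := h4
    _ = R := h5


/-- A pair `{p, q}` is a loose pair of `P` if one of the two leaves of the
flower of `pq` contains no point of `P` other than `p, q` in its interior. -/
def loosePair (P : Finset (EuclideanSpace ℝ (Fin 2))) (β : ℝ)
    (p q : EuclideanSpace ℝ (Fin 2)) : Prop :=
  ∃ u : EuclideanSpace ℝ (Fin 2), dist u p = β * dist p q ∧ dist u q = β * dist p q ∧
    ∀ x ∈ P, x ≠ p → x ≠ q → ¬ dist x u < β * dist p q


set_option maxHeartbeats 2000000 in
lemma key (P : Finset E2) (β : ℝ) (hβ : Real.sqrt 2 ≤ β)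
    (p q : E2) (hp : p ∈ P) (hq : q ∈ P) (hpq : p ≠ q)
    (o : E2) (R : ℝ) (hop : dist o p = R) (hoq : dist o q = R)
    (hRr : β * dist p q ≤ R) (hempty : ∀ x ∈ P, R ≤ dist x o)
    (hmin : ∀ p' ∈ P, ∀ q' ∈ P, p' ≠ q' →
      (∃ o' R', dist o' p' = R' ∧ dist o' q' = R' ∧ β * dist p' q' ≤ R' ∧
        ∀ x ∈ P, R' ≤ dist x o') → dist p q ≤ dist p' q') :
    loosePair P β p q := by
  classical
  have hdim : finrank ℝ E2 = 2 := finrank_euclideanSpace_fin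
  have hβ2 : (2:ℝ) ≤ β ^ 2 := by
    nlinarith [Real.sq_sqrt (show (0:ℝ) ≤ 2 by norm_num), Real.sqrt_nonneg 2]
  have hβpos : 0 < β := lt_of_lt_of_le (by positivity) hβ
  obtain ⟨L, hLdef⟩ : ∃ L : ℝ, L = dist p q := ⟨_, rfl⟩
  have hL : 0 < L := hLdef ▸ dist_pos.mpr hpq
  obtain ⟨d, hddef⟩ : ∃ d : ℝ, d = L / 2 := ⟨_, rfl⟩
  have hd : 0 < d := by rw [hddef]; positivity
  obtain ⟨e, hedef⟩ : ∃ e : E2, e = L⁻¹ • (q - p) := ⟨_, rfl⟩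
  have he : ‖e‖ = 1 := by
    rw [hedef, norm_smul, Real.norm_eq_abs, abs_inv, ← dist_eq_norm, dist_comm, ← hLdef,
      abs_of_pos hL, inv_mul_cancel₀ (ne_of_gt hL)]
  have hqp : q - p = L • e := by
    rw [hedef, smul_smul, mul_inv_cancel₀ (ne_of_gt hL), one_smul]
  obtain ⟨m, hmdef⟩ : ∃ m : E2, m = p + d • e := ⟨_, rfl⟩
  have hmp : m - p = d • e := by rw [hmdef]; abel
  have hpm : p - m = -(d • e) := by rw [hmdef]; abel
  have hqm : q - m = d • e := by
    have h1 : q - m = (q - p) - (m - p) := by abel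
    rw [h1, hqp, hmp, ← sub_smul]
    congr 1
    rw [hddef]; ring
  obtain ⟨w, hwdef⟩ : ∃ w : E2, w = o - m := ⟨_, rfl⟩
  have hopn : o - p = w + d • e := by
    have h1 : o - p = (o - m) + (m - p) := by abel
    rw [h1, hmp, hwdef]
  have hoqn : o - q = w - d • e := by
    have h1 : o - q = (o - m) - (q - m) := by abel
    rw [h1, hqm, hwdef]
  have hde : ‖d • e‖ = d := by
    rw [norm_smul, Real.norm_eq_abs, abs_of_pos hd, he, mul_one]
  have hwe : (inner ℝ w e : ℝ) = 0 := by
    have h1 : ‖w + d • e‖^2 = R^2 := by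
      rw [← hopn, ← dist_eq_norm, hop]
    have h2 : ‖w - d • e‖^2 = R^2 := by
      rw [← hoqn, ← dist_eq_norm, hoq]
    rw [norm_add_sq_real, real_inner_smul_right, hde] at h1
    rw [norm_sub_sq_real, real_inner_smul_right, hde] at h2
    have h3 : d * (inner ℝ w e : ℝ) = 0 := by linarith
    rcases mul_eq_zero.mp h3 with h | h
    · exact absurd h (ne_of_gt hd)
    · exact h
  obtain ⟨H, hHdef⟩ : ∃ H : ℝ, H = ‖w‖ := ⟨_, rfl⟩
  have hH2 : H^2 + d^2 = R^2 := by
    have h1 : ‖w + d • e‖^2 = R^2 := by rw [← hopn, ← dist_eq_norm, hop]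
    rw [norm_add_sq_real, real_inner_smul_right, hwe, hde] at h1
    rw [hHdef]
    linarith
  have hrR : β * L ≤ R := by rw [hLdef]; exact hRr
  have hRpos : 0 < R := lt_of_lt_of_le (mul_pos hβpos hL) hrR
  have hβL : 0 ≤ β * L := by positivity
  have hR2 : (β*L)^2 ≤ R^2 := pow_le_pow_left₀ hβL hrR 2
  have hLL : 2*(L*L) ≤ β^2*(L*L) := mul_le_mul_of_nonneg_right hβ2 (mul_pos hL hL).le
  have hdd : d^2 = (L*L)/4 := by rw [hddef]; ring
  have hHpos : 0 < H := by
    have h1 : 0 < H^2 := by linarith [mul_pos hL hL]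
    have hHnn : 0 ≤ H := hHdef ▸ norm_nonneg w
    rcases hHnn.lt_or_eq with h2 | h2
    · exact h2
    · exfalso; rw [← h2] at h1; simp at h1
  obtain ⟨n, hndef⟩ : ∃ n : E2, n = H⁻¹ • w := ⟨_, rfl⟩
  have hn : ‖n‖ = 1 := by
    rw [hndef, norm_smul, Real.norm_eq_abs, abs_inv, ← hHdef, abs_of_pos hHpos,
      inv_mul_cancel₀ (ne_of_gt hHpos)]
  have hwn : w = H • n := by
    rw [hndef, smul_smul, mul_inv_cancel₀ (ne_of_gt hHpos), one_smul]
  have hen : (inner ℝ e n : ℝ) = 0 := by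
    rw [hndef, real_inner_smul_right, real_inner_comm, hwe, mul_zero]
  obtain ⟨r, hrdef⟩ : ∃ r : ℝ, r = β * L := ⟨_, rfl⟩
  have hrpos : 0 < r := by rw [hrdef]; positivity
  have hr2 : r^2 - d^2 = (4 * β^2 - 1) * d^2 := by
    rw [hrdef, hddef]; ring
  have hddp : 2*(d*d) ≤ β^2*(d*d) := mul_le_mul_of_nonneg_right hβ2 (mul_pos hd hd).le
  have hr2pos : 0 < r^2 - d^2 := by
    have h1 : d^2 = d*d := sq d
    linarith [mul_pos hd hd]
  obtain ⟨h, hhdef⟩ : ∃ h : ℝ, h = Real.sqrt (r^2 - d^2) := ⟨_, rfl⟩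
  have hh2 : h^2 = r^2 - d^2 := by rw [hhdef]; exact Real.sq_sqrt (le_of_lt hr2pos)
  have hhpos : 0 < h := by rw [hhdef]; exact Real.sqrt_pos.mpr hr2pos
  have hhH : h ≤ H := by
    have h1 : r ≤ R := by rw [hrdef]; exact hrR
    have h2 : r^2 ≤ R^2 := pow_le_pow_left₀ hrpos.le h1 2
    have h3 : h^2 ≤ H^2 := by linarith
    exact le_of_pow_le_pow_left₀ two_ne_zero hHpos.le h3
  obtain ⟨η, hηdef⟩ : ∃ η : E2 → ℝ, η = fun x => (inner ℝ (x - m) n : ℝ) := ⟨_, rfl⟩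
  obtain ⟨cc, hccdef⟩ : ∃ cc : E2 → ℝ, cc = fun x => ‖x - m‖^2 - d^2 := ⟨_, rfl⟩
  have hηx : ∀ x : E2, η x = (inner ℝ (x - m) n : ℝ) := fun x => by rw [hηdef]
  have hccx : ∀ x : E2, cc x = ‖x - m‖^2 - d^2 := fun x => by rw [hccdef]
  have Fdist : ∀ (s : ℝ) (x : E2), dist x (m + s • n) ^ 2 = cc x - 2*s*η x + s^2 + d^2 := by
    intro s x
    have h1 : x - (m + s • n) = (x - m) - s • n := by abel
    rw [dist_eq_norm, h1, norm_sub_sq_real]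
    simp only [real_inner_smul_right, norm_smul, Real.norm_eq_abs, hn, mul_one]
    rw [hccx, hηx, sq_abs]
    ring
  have Fcp : ∀ s : ℝ, dist (m + s • n) p ^ 2 = s^2 + d^2 := by
    intro s
    have h1 : (m + s • n) - p = d • e + s • n := by rw [← hmp]; abel
    rw [dist_eq_norm, h1, norm_add_sq_real]
    simp only [real_inner_smul_left, real_inner_smul_right, hen, mul_zero, norm_smul,
      Real.norm_eq_abs, he, hn, mul_one]
    rw [sq_abs, sq_abs]
    ring
  have Fcq : ∀ s : ℝ, dist (m + s • n) q ^ 2 = s^2 + d^2 := by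
    intro s
    have h1 : (m + s • n) - q = -(d • e) + s • n := by
      rw [show -(d•e) = -(q-m) by rw [hqm]]; abel
    rw [dist_eq_norm, h1, norm_add_sq_real]
    simp only [inner_neg_left, real_inner_smul_left, real_inner_smul_right, hen, mul_zero,
      neg_zero, norm_neg, norm_smul, Real.norm_eq_abs, he, hn, mul_one]
    rw [sq_abs, sq_abs]
    ring
  have hoeq : o = m + H • n := by rw [← hwn, hwdef]; abel
  have hemp2 : ∀ x ∈ P, 2*H*η x ≤ cc x := by
    intro x hx
    have h1 := hempty x hx
    have h2 : R^2 ≤ dist x o ^2 := pow_le_pow_left₀ hRpos.le h1 2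
    rw [hoeq, Fdist H x] at h2
    linarith
  have hβr : β * dist p q = r := by rw [hrdef, hLdef]
  have hr2' : h^2 + d^2 = r^2 := by linarith
  by_cases hcase : ∀ x ∈ P, x ≠ p → x ≠ q → 2*h*η x ≤ cc x
  · -- the near leaf is empty: loose pair
    refine ⟨m + h • n, ?_, ?_, ?_⟩
    · rw [hβr]
      exact sqeq dist_nonneg hrpos.le (by rw [Fcp h]; linarith)
    · rw [hβr]
      exact sqeq dist_nonneg hrpos.le (by rw [Fcq h]; linarith)
    · intro x hx hxp hxq hlt
      rw [hβr] at hlt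
      have h2 : dist x (m + h • n) ^2 < r^2 := pow_lt_pow_left₀ hlt dist_nonneg two_ne_zero
      rw [Fdist h x] at h2
      have h3 := hcase x hx hxp hxq
      linarith
  · exfalso
    push_neg at hcase
    obtain ⟨x₀, hx₀P, hx₀p, hx₀q, hx₀lt⟩ := hcase
    obtain ⟨V, hVdef⟩ : ∃ V : Finset E2, V = P.filter (fun x => x ≠ p ∧ x ≠ q ∧ cc x < 2*h*η x) := ⟨_, rfl⟩
    have hVne : V.Nonempty := ⟨x₀, by rw [hVdef, Finset.mem_filter]; exact ⟨hx₀P, hx₀p, hx₀q, hx₀lt⟩⟩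
    have hVmem : ∀ x ∈ V, x ∈ P ∧ x ≠ p ∧ x ≠ q ∧ cc x < 2*h*η x := by
      intro x hx; rw [hVdef, Finset.mem_filter] at hx; exact hx
    have hηneg : ∀ x ∈ V, η x < 0 := by
      intro x hx
      obtain ⟨hxP, -, -, hxlt⟩ := hVmem x hx
      have h1 := hemp2 x hxP
      by_contra hcon
      push_neg at hcon
      have h2 : 2*h*η x ≤ 2*H*η x := by
        have := mul_le_mul_of_nonneg_right (by linarith : 2*h ≤ 2*H) hcon
        linarith
      linarith
    obtain ⟨x', hx'V, hmax⟩ := Finset.exists_max_image V (fun x => cc x / (2 * η x)) hVne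
    obtain ⟨hx'P, hx'p, hx'q, hx'lt⟩ := hVmem x' hx'V
    have hη' : η x' < 0 := hηneg x' hx'V
    obtain ⟨S, hSdef⟩ : ∃ S : ℝ, S = cc x' / (2 * η x') := ⟨_, rfl⟩
    have hcS : cc x' = 2*S*η x' := by
      have hne : η x' ≠ 0 := ne_of_lt hη'
      rw [hSdef]
      field_simp
    have hhS : h < S := by
      by_contra hcon
      push_neg at hcon
      have h1 : h * η x' ≤ S * η x' := mul_le_mul_of_nonpos_right hcon hη'.le
      linarith
    have hSH : S ≤ H := by
      have h1 := hemp2 x' hx'P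
      by_contra hcon
      push_neg at hcon
      have h2 : S * η x' < H * η x' := mul_lt_mul_of_neg_right hcon hη'
      linarith
    have hSpos : 0 < S := lt_trans hhpos hhS
    obtain ⟨R', hR'def⟩ : ∃ R' : ℝ, R' = Real.sqrt (S^2 + d^2) := ⟨_, rfl⟩
    have hR'2 : R'^2 = S^2 + d^2 := by rw [hR'def]; exact Real.sq_sqrt (by positivity)
    have hR'pos : 0 < R' := by rw [hR'def]; exact Real.sqrt_pos.mpr (by positivity)
    have ho'p : dist (m + S • n) p = R' := sqeq dist_nonneg hR'pos.le (by rw [Fcp S]; linarith)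
    have ho'q : dist (m + S • n) q = R' := sqeq dist_nonneg hR'pos.le (by rw [Fcq S]; linarith)
    have ho'x : dist (m + S • n) x' = R' := by
      rw [dist_comm]
      exact sqeq dist_nonneg hR'pos.le (by rw [Fdist S x']; linarith)
    have hempty' : ∀ x ∈ P, R' ≤ dist x (m + S • n) := by
      intro x hx
      have hkey : 2*S*η x ≤ cc x := by
        by_cases hxV : x ∈ V
        · have h1 := hmax x hxV
          have h2 := hηneg x hxV
          rw [div_le_iff_of_neg (by linarith : 2*η x < 0)] at h1
          rw [← hSdef] at h1
          linarith
        · by_cases hxp : x = p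
          · have hcp : cc p = 0 := by rw [hccx, hpm, norm_neg, hde]; ring
            have hep : η p = 0 := by rw [hηx, hpm, inner_neg_left, real_inner_smul_left, hen]; ring
            rw [hxp, hcp, hep]; norm_num
          · by_cases hxq : x = q
            · have hcq : cc q = 0 := by rw [hccx, hqm, hde]; ring
              have heq : η q = 0 := by rw [hηx, hqm, real_inner_smul_left, hen]; ring
              rw [hxq, hcq, heq]; norm_num
            · have h1 : 2*h*η x ≤ cc x := by
                by_contra hcon
                push_neg at hcon
                exact hxV (by rw [hVdef, Finset.mem_filter]; exact ⟨hx, hxp, hxq, hcon⟩)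
              rcases le_or_gt 0 (η x) with hsign | hsign
              · have h2 := hemp2 x hx
                have h3 : S * η x ≤ H * η x := mul_le_mul_of_nonneg_right hSH hsign
                linarith
              · have h3 : S * η x ≤ h * η x := mul_le_mul_of_nonpos_right hhS.le hsign.le
                linarith
      have h2 : R'^2 ≤ dist x (m + S • n) ^2 := by rw [Fdist S x]; linarith
      calc R' = Real.sqrt (R'^2) := (Real.sqrt_sq hR'pos.le).symm
        _ ≤ Real.sqrt (dist x (m + S • n)^2) := Real.sqrt_le_sqrt h2
        _ = dist x (m + S • n) := Real.sqrt_sq dist_nonneg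
    -- coordinates of x'
    obtain ⟨ξ, hξdef⟩ : ∃ ξ : ℝ, ξ = (inner ℝ (x' - m) e : ℝ) := ⟨_, rfl⟩
    have hA : ‖x' - m‖^2 = ξ^2 + (η x')^2 := by
      rw [hξdef, hηx]
      exact decomp hdim e n (x' - m) he hn hen
    have hc2 : ξ^2 + (η x')^2 - d^2 = 2*S*η x' := by
      rw [hccx] at hcS
      linarith
    have hSη : 2*S*η x' < 0 := by
      have := mul_pos hSpos (neg_pos.mpr hη')
      linarith [this]
    have hξ2 : ξ^2 < d^2 := by
      linarith [sq_nonneg (η x')]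
    have hξd : -d < ξ ∧ ξ < d := by
      constructor
      · have h1 : (-ξ)^2 < d^2 := by rw [neg_sq]; exact hξ2
        have := lt_of_pow_lt_pow_left₀ 2 hd.le h1
        linarith
      · exact lt_of_pow_lt_pow_left₀ 2 hd.le hξ2
    have hηb : 2*h*(-(η x')) ≤ d^2 := by
      have h1 : h * (-(η x')) ≤ S * (-(η x')) :=
        mul_le_mul_of_nonneg_right hhS.le (by linarith)
      linarith [sq_nonneg ξ, sq_nonneg (η x')]
    have hη2 : (η x')^2 ≤ (d^2/(2*h))^2 := by
      have h1 : -(η x') ≤ d^2/(2*h) := by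
        rw [le_div_iff₀ (by positivity)]
        linarith
      have h2 : (-(η x'))^2 ≤ (d^2/(2*h))^2 := pow_le_pow_left₀ (by linarith) h1 2
      rwa [neg_sq] at h2
    have hh7 : 7*d^2 ≤ h^2 := by
      have h1 : d^2 = d*d := sq d
      linarith
    have hη3 : (η x')^2 ≤ d^2/28 := by
      have h1 : (d^2/(2*h))^2 ≤ d^2/28 := by
        rw [div_pow, div_le_div_iff₀ (by positivity) (by norm_num : (0:ℝ) < 28)]
        have h2 := mul_le_mul_of_nonneg_left hh7 (sq_nonneg d)
        have h3 : (2*h)^2 = 4*h^2 := by ring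
        have h4 : (d^2)^2 = d^2*d^2 := by ring
        calc (d^2)^2 * 28 = 4*(d^2*(7*d^2)) := by ring
          _ ≤ 4*(d^2*h^2) := by linarith
          _ = d^2*(2*h)^2 := by ring
      linarith
    -- distances from x' to p and q
    have hδp : dist x' p ^2 = (ξ + d)^2 + (η x')^2 := by
      have h1 : x' - p = (x' - m) + d • e := by
        have h2 : x' - p = (x' - m) - (p - m) := by abel
        rw [h2, hpm]; abel
      rw [dist_eq_norm, h1, norm_add_sq_real, real_inner_smul_right, hde, hA, ← hξdef]
      ring
    have hδq : dist x' q ^2 = (ξ - d)^2 + (η x')^2 := by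
      have h1 : x' - q = (x' - m) - d • e := by
        have h2 : x' - q = (x' - m) - (q - m) := by abel
        rw [h2, hqm]
      rw [dist_eq_norm, h1, norm_sub_sq_real, real_inner_smul_right, hde, hA, ← hξdef]
      ring
    have hr4 : r^2 = 4*(β^2*d^2) := by rw [hrdef, hddef]; ring
    have hL2 : L^2 = 4*d^2 := by rw [hddef]; ring
    have hS2 : h^2 < S^2 := by
      have := pow_lt_pow_left₀ hhS hhpos.le two_ne_zero
      linarith
    -- choose the closer endpoint z
    have main : ∀ z : E2, z ∈ P → z ≠ x' → dist (m + S • n) z = R' →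
        dist x' z ^2 ≤ d^2 + (η x')^2 → False := by
      intro z hzP hzx ho'z hdz2
      have hβd2 : d^2 + (η x')^2 ≤ (29/28)*d^2 := by linarith
      have hdlt : dist z x' < L := by
        have h1 : dist z x' ^2 < L^2 := by
          rw [dist_comm]
          have : (29/28)*d^2 < 4*d^2 := by linarith [sq_nonneg d, mul_pos hd hd, sq d]
          linarith
        exact lt_of_pow_lt_pow_left₀ 2 hL.le h1
      have hβR' : β * dist z x' ≤ R' := by
        have h1 : (β * dist z x')^2 ≤ R'^2 := by
          have h2 : β^2 * (dist z x'^2) ≤ β^2 * ((29/28)*d^2) := by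
            apply mul_le_mul_of_nonneg_left _ (sq_nonneg β)
            rw [dist_comm]; linarith
          have h3 : β^2 * ((29/28)*d^2) ≤ 4*(β^2*d^2) := by
            have := mul_nonneg (sq_nonneg β) (sq_nonneg d)
            linarith
          have h4 : (β * dist z x')^2 = β^2 * (dist z x'^2) := by ring
          linarith
        exact le_of_pow_le_pow_left₀ two_ne_zero hR'pos.le h1
      have := hmin z hzP x' hx'P hzx ⟨m + S • n, R', ho'z, ho'x, hβR', hempty'⟩
      rw [← hLdef] at this
      linarith
    rcases le_or_gt ξ 0 with hsig | hsig
    · refine main p hp (Ne.symm hx'p) ho'p ?_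
      rw [hδp]
      have h1 : (ξ + d)^2 ≤ d^2 := sq_le_sq' (by linarith [hξd.1]) (by linarith)
      linarith
    · refine main q hq (Ne.symm hx'q) ho'q ?_
      rw [hδq]
      have h1 : (ξ - d)^2 ≤ d^2 := sq_le_sq' (by linarith) (by linarith [hξd.2])
      linarith


/-- If the Delaunay triangulation of `P` has a triangle with an angle at most
`α = arcsin (1/(2β))`, then `P` contains a loose pair. -/
theorem bad_delaunay_triangle_gives_loose_pair
    (P : Finset (EuclideanSpace ℝ (Fin 2))) (β : ℝ) (hβ : Real.sqrt 2 ≤ β)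
    (a b c : EuclideanSpace ℝ (Fin 2)) (ha : a ∈ P) (hb : b ∈ P) (hc : c ∈ P)
    (hab : a ≠ b) (hac : a ≠ c) (hbc : b ≠ c)
    (hcol : ¬ Collinear ℝ ({a, b, c} : Set (EuclideanSpace ℝ (Fin 2))))
    (hDel : ∃ (o : EuclideanSpace ℝ (Fin 2)) (R : ℝ),
      dist o a = R ∧ dist o b = R ∧ dist o c = R ∧ ∀ x ∈ P, ¬ dist x o < R)
    (hang : ∠ b a c ≤ Real.arcsin (1 / (2 * β)) ∨ ∠ a b c ≤ Real.arcsin (1 / (2 * β)) ∨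
      ∠ a c b ≤ Real.arcsin (1 / (2 * β))) :
    ∃ p ∈ P, ∃ q ∈ P, p ≠ q ∧ loosePair P β p q := by
  classical
  obtain ⟨o, R, hoa, hob, hoc, hemp⟩ := hDel
  have hempty : ∀ x ∈ P, R ≤ dist x o := fun x hx => not_lt.mp (hemp x hx)
  have hRpos : 0 < R := by
    have h0 : 0 ≤ R := hoa ▸ dist_nonneg
    rcases h0.lt_or_eq with h | h
    · exact h
    · exfalso
      apply hab
      have h1 : dist o a = 0 := by rw [hoa, ← h]
      have h2 : dist o b = 0 := by rw [hob, ← h]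
      rw [dist_eq_zero] at h1 h2
      rw [← h1, ← h2]
  have hchord : ∃ u ∈ P, ∃ v ∈ P, u ≠ v ∧ β * dist u v ≤ R ∧
      dist o u = R ∧ dist o v = R := by
    rcases hang with h | h | h
    · exact ⟨b, hb, c, hc, hbc, chord o R β hβ hRpos a b c hab hac hbc hoa hob hoc h,
        hob, hoc⟩
    · exact ⟨a, ha, c, hc, hac, chord o R β hβ hRpos b a c hab.symm hbc hac hob hoa hoc h,
        hoa, hoc⟩
    · exact ⟨a, ha, b, hb, hab,
        chord o R β hβ hRpos c a b hac.symm hbc.symm hab hoc hoa hob h, hoa, hob⟩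
  obtain ⟨u, hu, v, hv, huv, hβuv, hou, hov⟩ := hchord
  obtain ⟨T, hTdef⟩ : ∃ T : Finset (E2 × E2), T = (P ×ˢ P).filter (fun z =>
      z.1 ≠ z.2 ∧ ∃ o' R', dist o' z.1 = R' ∧ dist o' z.2 = R' ∧
        β * dist z.1 z.2 ≤ R' ∧ ∀ x ∈ P, R' ≤ dist x o') := ⟨_, rfl⟩
  have hTne : T.Nonempty := by
    refine ⟨(u, v), ?_⟩
    rw [hTdef, Finset.mem_filter]
    exact ⟨Finset.mem_product.mpr ⟨hu, hv⟩, huv, o, R, hou, hov, hβuv, hempty⟩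
  obtain ⟨z, hzT, hzmin⟩ := Finset.exists_min_image T (fun z => dist z.1 z.2) hTne
  rw [hTdef, Finset.mem_filter] at hzT
  obtain ⟨hzP, hzne, o', R', h1, h2, h3, h4⟩ := hzT
  have hz1 : z.1 ∈ P := (Finset.mem_product.mp hzP).1
  have hz2 : z.2 ∈ P := (Finset.mem_product.mp hzP).2
  refine ⟨z.1, hz1, z.2, hz2, hzne, ?_⟩
  apply key P β hβ z.1 z.2 hz1 hz2 hzne o' R' h1 h2 h3 h4
  intro p' hp' q' hq' hne' hQ
  exact hzmin (p', q') (by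
    rw [hTdef, Finset.mem_filter]
    exact ⟨Finset.mem_product.mpr ⟨hp', hq'⟩, hne', hQ⟩)
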